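/- Let a < b be reals and let f, g : [a,b] → ℝ be distinct continuous concave functions with f(a) ≤ g(a) and f(b) = g(b). For θ ∈ [0,π] and h ∈ {f, g}, say ĥ(θ) is defined and equals x₀ ∈ [a,b] if x₀ is the unique maximizer over [a,b] of x ↦ x·cos θ + h(x)·sin θ. Then there exists θ ∈ [0,π] such that f̂(θ) and ĝ(θ) are both defined and f̂(θ) > ĝ(θ). -/

import Mathlib

open Set Filter

/-- Subtracting a linear function preserves concavity. -/
lemma aux_concave_sub_linear {S : Set ℝ} {f : ℝ → ℝ} (hf : ConcaveOn ℝ S f) (s : ℝ) :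
    ConcaveOn ℝ S (fun x => f x - s * x) := by
  refine ⟨hf.1, fun x hx y hy p q hp hq hpq => ?_⟩
  have h := hf.2 hx hy hp hq hpq
  simp only [smul_eq_mul] at h ⊢
  nlinarith [h]

/-- If `f - g` increases from `x` to `y`, then somewhere a right chord of `f`
beats a left chord of `g`. -/
lemma chord_gap {a b : ℝ} {f g : ℝ → ℝ}
    (hf_cont : ContinuousOn f (Set.Icc a b)) (hg_cont : ContinuousOn g (Set.Icc a b))
    {x y : ℝ} (hx : x ∈ Set.Icc a b) (hy : y ∈ Set.Icc a b) (hxy : x < y)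
    (hD : f x - g x < f y - g y) :
    ∃ v c u, x ≤ v ∧ v < c ∧ c < u ∧ u ≤ y ∧
      (g c - g v) * (u - c) < (f u - f c) * (c - v) := by
  by_contra hcon
  push_neg at hcon
  have hyx : (0:ℝ) < y - x := sub_pos.mpr hxy
  have key : ∀ n : ℕ, 2 ≤ n →
      f y - f (x + (y - x) / n) ≤ g (y - (y - x) / n) - g x := by
    intro n hn
    have hn0 : (0:ℝ) < n := by
      have : (2:ℝ) ≤ n := by exact_mod_cast hn
      linarith
    set Δ : ℝ := (y - x) / n with hΔdef
    have hΔ : 0 < Δ := div_pos hyx hn0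
    have hsum : x + (n:ℝ) * Δ = y := by
      rw [hΔdef, mul_div_cancel₀ _ hn0.ne']; ring
    set F : ℕ → ℝ := fun i => f (x + (i:ℝ) * Δ) with hF
    set G : ℕ → ℝ := fun i => g (x + (i:ℝ) * Δ) with hG
    have hterm : ∀ j ∈ Finset.range (n - 1),
        F (j + 1 + 1) - F (j + 1) ≤ G (j + 1) - G j := by
      intro j hj
      have hj' : j + 2 ≤ n := by
        have := Finset.mem_range.mp hj; omega
      have h2 : ((j:ℝ) + 2) ≤ (n:ℝ) := by exact_mod_cast hj'
      have happ := hcon (x + (j:ℝ) * Δ) (x + ((j:ℝ) + 1) * Δ) (x + ((j:ℝ) + 2) * Δ)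
        (by nlinarith) (by nlinarith) (by nlinarith) (by nlinarith)
      have e1 : (x + ((j:ℝ) + 1) * Δ) - (x + (j:ℝ) * Δ) = Δ := by ring
      have e2 : (x + ((j:ℝ) + 2) * Δ) - (x + ((j:ℝ) + 1) * Δ) = Δ := by ring
      rw [e1, e2] at happ
      have hle := le_of_mul_le_mul_right happ hΔ
      have c1 : ((j:ℕ) + 1 + 1 : ℕ) = ((j:ℕ) + 2 : ℕ) := by omega
      simp only [hF, hG, c1]
      push_cast
      convert hle using 3
    have hle := Finset.sum_le_sum hterm
    rw [Finset.sum_range_sub (fun j => F (j + 1)) (n - 1),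
        Finset.sum_range_sub G (n - 1)] at hle
    have h1n : n - 1 + 1 = n := by omega
    rw [h1n] at hle
    -- hle : F n - F 1 ≤ G (n-1) - G 0
    have eFn : F n = f y := by rw [hF]; simp only []; rw [hsum]
    have eF1 : F 1 = f (x + (y - x) / n) := by
      simp only [hF, Nat.cast_one, one_mul, hΔdef]
    have eGn : G (n - 1) = g (y - (y - x) / n) := by
      simp only [hG]
      congr 1
      have : ((n - 1 : ℕ) : ℝ) = (n:ℝ) - 1 := by
        have : 1 ≤ n := by omega
        push_cast [this]; ring
      rw [this, hΔdef]
      field_simp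
      ring
    have eG0 : G 0 = g x := by simp [hG]
    rw [eFn, eF1, eGn, eG0] at hle
    exact hle
  -- pass to the limit
  have t0 : Tendsto (fun n : ℕ => (y - x) / n) atTop (nhds 0) :=
    tendsto_const_div_atTop_nhds_zero_nat (y - x)
  have tc : Tendsto (fun n : ℕ => x + (y - x) / n) atTop (nhds x) := by
    simpa using tendsto_const_nhds.add t0
  have td : Tendsto (fun n : ℕ => y - (y - x) / n) atTop (nhds y) := by
    simpa using tendsto_const_nhds.sub t0
  have hmem1 : ∀ᶠ n : ℕ in atTop, x + (y - x) / n ∈ Set.Icc a b := by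
    filter_upwards [eventually_ge_atTop 1] with n hn
    have hn1 : (1:ℝ) ≤ n := by exact_mod_cast hn
    have h1 : 0 ≤ (y - x) / n := by positivity
    have h2 : (y - x) / n ≤ y - x := div_le_self hyx.le hn1
    exact ⟨le_trans hx.1 (by linarith), by linarith [hy.2]⟩
  have hmem2 : ∀ᶠ n : ℕ in atTop, y - (y - x) / n ∈ Set.Icc a b := by
    filter_upwards [eventually_ge_atTop 1] with n hn
    have hn1 : (1:ℝ) ≤ n := by exact_mod_cast hn
    have h1 : 0 ≤ (y - x) / n := by positivity
    have h2 : (y - x) / n ≤ y - x := div_le_self hyx.le hn1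
    exact ⟨by linarith [hx.1], by linarith [hy.2]⟩
  have tfc : Tendsto (fun n : ℕ => f (x + (y - x) / n)) atTop (nhds (f x)) :=
    (hf_cont x hx).tendsto.comp (tendsto_nhdsWithin_iff.mpr ⟨tc, hmem1⟩)
  have tgd : Tendsto (fun n : ℕ => g (y - (y - x) / n)) atTop (nhds (g y)) :=
    (hg_cont y hy).tendsto.comp (tendsto_nhdsWithin_iff.mpr ⟨td, hmem2⟩)
  have final : f y - f x ≤ g y - g x :=
    le_of_tendsto_of_tendsto (tendsto_const_nhds.sub tfc) (tgd.sub tendsto_const_nhds)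
      (eventually_atTop.mpr ⟨2, key⟩)
  linarith

/-- The set of slopes for which a concave function has a non-unique maximizer. -/
def badSet (a b : ℝ) (f : ℝ → ℝ) : Set ℝ :=
  {s : ℝ | ∃ p ∈ Set.Icc a b, ∃ q ∈ Set.Icc a b, p < q ∧
    (∀ x ∈ Set.Icc a b, f x - s * x ≤ f p - s * p) ∧
    (∀ x ∈ Set.Icc a b, f x - s * x ≤ f q - s * q)}

lemma badSet_countable (a b : ℝ) (f : ℝ → ℝ) (hf : ConcaveOn ℝ (Set.Icc a b) f) :
    (badSet a b f).Countable := by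
  have hsub : badSet a b f ⊆ ⋃ r1 : ℚ, ⋃ r2 : ℚ,
      {s : ℝ | (r1:ℝ) < (r2:ℝ) ∧ s * ((r2:ℝ) - (r1:ℝ)) = f r2 - f r1} := by
    rintro s ⟨p, hp, q, hq, hpq, hmaxp, hmaxq⟩
    obtain ⟨r1, hr1a, hr1b⟩ := exists_rat_btwn hpq
    obtain ⟨r2, hr2a, hr2b⟩ := exists_rat_btwn hr1b
    have hφ : ConcaveOn ℝ (Set.Icc a b) (fun x => f x - s * x) :=
      aux_concave_sub_linear hf s
    have hr1mem : (r1:ℝ) ∈ Set.Icc a b :=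
      ⟨le_trans hp.1 hr1a.le, le_trans hr2a.le (le_trans hr2b.le hq.2)⟩
    have hr2mem : (r2:ℝ) ∈ Set.Icc a b :=
      ⟨le_trans hp.1 (hr1a.trans hr2a).le, le_trans hr2b.le hq.2⟩
    have hpqeq : f p - s * p = f q - s * q :=
      le_antisymm (hmaxq p hp) (hmaxp q hq)
    have key : ∀ z : ℝ, z ∈ Set.Icc p q → f z - s * z = f p - s * p := by
      intro z hz
      refine le_antisymm (hmaxp z ⟨le_trans hp.1 hz.1, le_trans hz.2 hq.2⟩) ?_
      have := hφ.min_le_of_mem_Icc hp hq hz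
      rw [← hpqeq, min_self] at this
      exact this
    have e1 : f r1 - s * r1 = f p - s * p :=
      key _ ⟨hr1a.le, (hr2a.trans hr2b).le⟩
    have e2 : f r2 - s * r2 = f p - s * p :=
      key _ ⟨(hr1a.trans hr2a).le, hr2b.le⟩
    refine Set.mem_iUnion.mpr ⟨r1, Set.mem_iUnion.mpr ⟨r2, ?_⟩⟩
    refine ⟨by exact_mod_cast hr2a, ?_⟩
    have := e1.trans e2.symm
    linarith [this]
  refine Set.Countable.mono hsub ?_
  refine Set.countable_iUnion fun r1 => Set.countable_iUnion fun r2 => ?_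
  apply Set.Subsingleton.countable
  rintro s1 ⟨hlt, h1⟩ s2 ⟨-, h2⟩
  have hne : ((r2:ℝ) - (r1:ℝ)) ≠ 0 := sub_ne_zero.mpr (ne_of_gt hlt)
  exact mul_right_cancel₀ hne (h1.trans h2.symm)

theorem concave_curves_direction_separation
    (a b : ℝ) (hab : a < b) (f g : ℝ → ℝ)
    (hf_cont : ContinuousOn f (Set.Icc a b)) (hg_cont : ContinuousOn g (Set.Icc a b))
    (hf_conc : ConcaveOn ℝ (Set.Icc a b) f) (hg_conc : ConcaveOn ℝ (Set.Icc a b) g)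
    (hdistinct : ¬ Set.EqOn f g (Set.Icc a b))
    (ha : f a ≤ g a) (hb : f b = g b) :
    ∃ θ ∈ Set.Icc (0 : ℝ) Real.pi, ∃ xf ∈ Set.Icc a b, ∃ xg ∈ Set.Icc a b,
      (∀ x ∈ Set.Icc a b,
        x * Real.cos θ + f x * Real.sin θ ≤ xf * Real.cos θ + f xf * Real.sin θ) ∧
      (∀ x ∈ Set.Icc a b,
        x * Real.cos θ + f x * Real.sin θ = xf * Real.cos θ + f xf * Real.sin θ → x = xf) ∧
      (∀ x ∈ Set.Icc a b,
        x * Real.cos θ + g x * Real.sin θ ≤ xg * Real.cos θ + g xg * Real.sin θ) ∧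
      (∀ x ∈ Set.Icc a b,
        x * Real.cos θ + g x * Real.sin θ = xg * Real.cos θ + g xg * Real.sin θ → x = xg) ∧
      xg < xf := by
  have hamem : a ∈ Set.Icc a b := ⟨le_refl a, hab.le⟩
  have hbmem : b ∈ Set.Icc a b := ⟨hab.le, le_refl b⟩
  -- Step 1 : find X < Y with (f-g)(X) < (f-g)(Y)
  obtain ⟨c0, hc0mem, hc0⟩ : ∃ x ∈ Set.Icc a b, f x ≠ g x := by
    by_contra h
    push_neg at h
    exact hdistinct fun x hx => h x hx
  obtain ⟨X, Y, hX, hY, hXY, hD⟩ :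
      ∃ X Y, X ∈ Set.Icc a b ∧ Y ∈ Set.Icc a b ∧ X < Y ∧ f X - g X < f Y - g Y := by
    rcases lt_or_gt_of_ne hc0 with hlt | hgt
    · refine ⟨c0, b, hc0mem, hbmem, ?_, by linarith⟩
      rcases eq_or_lt_of_le hc0mem.2 with h | h
      · exact absurd (h ▸ hb) hc0
      · exact h
    · refine ⟨a, c0, hamem, hc0mem, ?_, by linarith⟩
      rcases eq_or_lt_of_le hc0mem.1 with h | h
      · rw [← h] at hgt; linarith
      · exact h
  -- Step 2 : chord gap
  obtain ⟨v, c, u, hXv, hvc, hcu, huY, hchord⟩ :=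
    chord_gap hf_cont hg_cont hX hY hXY hD
  have hvmem : v ∈ Set.Icc a b := ⟨le_trans hX.1 hXv, le_trans (by linarith) hY.2⟩
  have hcmem : c ∈ Set.Icc a b := ⟨le_trans hvmem.1 hvc.le, le_trans (by linarith) hY.2⟩
  have humem : u ∈ Set.Icc a b := ⟨le_trans hcmem.1 hcu.le, le_trans huY hY.2⟩
  have hcv : (0:ℝ) < c - v := sub_pos.mpr hvc
  have huc : (0:ℝ) < u - c := sub_pos.mpr hcu
  -- Step 3 : choose slope s
  set A : ℝ := (g c - g v) / (c - v) with hAdef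
  set B : ℝ := (f u - f c) / (u - c) with hBdef
  have hAB : A < B := by
    rw [hAdef, hBdef, div_lt_div_iff₀ hcv huc]
    exact hchord
  have hbad : (badSet a b f ∪ badSet a b g).Countable :=
    (badSet_countable a b f hf_conc).union (badSet_countable a b g hg_conc)
  obtain ⟨s, hsIoo, hsbad⟩ :
      ∃ s, s ∈ Set.Ioo A B ∧ s ∉ badSet a b f ∪ badSet a b g := by
    by_contra h
    push_neg at h
    have hsub : Set.Ioo A B ⊆ badSet a b f ∪ badSet a b g := fun s hs => h s hs
    have h1 := MeasureTheory.measure_mono (μ := MeasureTheory.volume) hsub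
    rw [hbad.measure_zero, Real.volume_Ioo] at h1
    simp only [nonpos_iff_eq_zero, ENNReal.ofReal_eq_zero] at h1
    linarith
  have hsA : A < s := hsIoo.1
  have hsB : s < B := hsIoo.2
  have hsf : s ∉ badSet a b f := fun h => hsbad (Or.inl h)
  have hsg : s ∉ badSet a b g := fun h => hsbad (Or.inr h)
  -- strict value inequalities at the witnesses
  have hfu : f c - s * c < f u - s * u := by
    have := (lt_div_iff₀ huc).mp hsB
    nlinarith
  have hgv : g c - s * c < g v - s * v := by
    have := (div_lt_iff₀ hcv).mp hsA
    nlinarith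
  -- Step 4 : maximizers
  have hφf_cont : ContinuousOn (fun x => f x - s * x) (Set.Icc a b) :=
    hf_cont.sub (continuousOn_const.mul continuousOn_id)
  have hφg_cont : ContinuousOn (fun x => g x - s * x) (Set.Icc a b) :=
    hg_cont.sub (continuousOn_const.mul continuousOn_id)
  have hφf_conc := aux_concave_sub_linear hf_conc s
  have hφg_conc := aux_concave_sub_linear hg_conc s
  obtain ⟨xf, hxfmem, hxfmax⟩ :=
    isCompact_Icc.exists_isMaxOn (Set.nonempty_Icc.mpr hab.le) hφf_cont
  obtain ⟨xg, hxgmem, hxgmax⟩ :=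
    isCompact_Icc.exists_isMaxOn (Set.nonempty_Icc.mpr hab.le) hφg_cont
  have hxfmax' : ∀ z ∈ Set.Icc a b, f z - s * z ≤ f xf - s * xf := fun z hz => hxfmax hz
  have hxgmax' : ∀ z ∈ Set.Icc a b, g z - s * z ≤ g xg - s * xg := fun z hz => hxgmax hz
  -- every maximizer of φf is > c ; every maximizer of φg is < c
  have hfloc : ∀ m ∈ Set.Icc a b, (∀ z ∈ Set.Icc a b, f z - s * z ≤ f m - s * m) → c < m := by
    intro m hm hmmax
    by_contra hle
    push_neg at hle
    have h1 : min (f m - s * m) (f u - s * u) ≤ f c - s * c :=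
      hφf_conc.min_le_of_mem_Icc hm humem ⟨hle, hcu.le⟩
    have h2 : f c - s * c < f m - s * m := lt_of_lt_of_le hfu (hmmax u humem)
    have := lt_min h2 hfu
    linarith
  have hgloc : ∀ m ∈ Set.Icc a b, (∀ z ∈ Set.Icc a b, g z - s * z ≤ g m - s * m) → m < c := by
    intro m hm hmmax
    by_contra hle
    push_neg at hle
    have h1 : min (g v - s * v) (g m - s * m) ≤ g c - s * c :=
      hφg_conc.min_le_of_mem_Icc hvmem hm ⟨hvc.le, hle⟩
    have h2 : g c - s * c < g m - s * m := lt_of_lt_of_le hgv (hmmax v hvmem)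
    have := lt_min hgv h2
    linarith
  have hcxf : c < xf := hfloc xf hxfmem hxfmax'
  have hxgc : xg < c := hgloc xg hxgmem hxgmax'
  -- uniqueness
  have huniqf : ∀ z ∈ Set.Icc a b, f z - s * z = f xf - s * xf → z = xf := by
    intro z hz hzeq
    by_contra hne
    have hzmax : ∀ w ∈ Set.Icc a b, f w - s * w ≤ f z - s * z := by
      intro w hw; rw [hzeq]; exact hxfmax' w hw
    rcases lt_or_gt_of_ne hne with h | h
    · exact hsf ⟨z, hz, xf, hxfmem, h, hzmax, hxfmax'⟩
    · exact hsf ⟨xf, hxfmem, z, hz, h, hxfmax', hzmax⟩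
  have huniqg : ∀ z ∈ Set.Icc a b, g z - s * z = g xg - s * xg → z = xg := by
    intro z hz hzeq
    by_contra hne
    have hzmax : ∀ w ∈ Set.Icc a b, g w - s * w ≤ g z - s * z := by
      intro w hw; rw [hzeq]; exact hxgmax' w hw
    rcases lt_or_gt_of_ne hne with h | h
    · exact hsg ⟨z, hz, xg, hxgmem, h, hzmax, hxgmax'⟩
    · exact hsg ⟨xg, hxgmem, z, hz, h, hxgmax', hzmax⟩
  -- Step 5 : the angle
  set t : ℝ := -s with htdef
  have hroot : (0:ℝ) < Real.sqrt (1 + t ^ 2) := by positivity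
  have hsq : Real.sqrt (1 + t ^ 2) ^ 2 = 1 + t ^ 2 :=
    Real.sq_sqrt (by positivity)
  have habs : |t| ≤ Real.sqrt (1 + t ^ 2) := by
    rw [← Real.sqrt_sq_eq_abs]
    exact Real.sqrt_le_sqrt (by nlinarith)
  set θ : ℝ := Real.arccos (t / Real.sqrt (1 + t ^ 2)) with hθdef
  have hθmem : θ ∈ Set.Icc (0:ℝ) Real.pi :=
    ⟨Real.arccos_nonneg _, Real.arccos_le_pi _⟩
  have hbound1 : -1 ≤ t / Real.sqrt (1 + t ^ 2) := by
    rw [le_div_iff₀ hroot]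
    have := abs_le.mp habs
    linarith [this.1]
  have hbound2 : t / Real.sqrt (1 + t ^ 2) ≤ 1 := by
    rw [div_le_one hroot]
    have := abs_le.mp habs
    linarith [this.2]
  have hcos : Real.cos θ = t / Real.sqrt (1 + t ^ 2) :=
    Real.cos_arccos hbound1 hbound2
  have hsin : Real.sin θ = 1 / Real.sqrt (1 + t ^ 2) := by
    rw [hθdef, Real.sin_arccos]
    rw [div_pow, hsq]
    have e : 1 - t ^ 2 / (1 + t ^ 2) = 1 / (1 + t ^ 2) := by
      field_simp
      ring
    rw [e, one_div, Real.sqrt_inv, one_div]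
  have hsinpos : 0 < Real.sin θ := by rw [hsin]; positivity
  have hcs : Real.cos θ = t * Real.sin θ := by
    rw [hcos, hsin]; ring
  have ef : ∀ z : ℝ, z * Real.cos θ + f z * Real.sin θ = Real.sin θ * (f z - s * z) := by
    intro z; rw [hcs, htdef]; ring
  have eg : ∀ z : ℝ, z * Real.cos θ + g z * Real.sin θ = Real.sin θ * (g z - s * z) := by
    intro z; rw [hcs, htdef]; ring
  refine ⟨θ, hθmem, xf, hxfmem, xg, hxgmem, ?_, ?_, ?_, ?_, lt_trans hxgc hcxf⟩
  · intro x hx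
    rw [ef, ef]
    exact mul_le_mul_of_nonneg_left (hxfmax' x hx) hsinpos.le
  · intro x hx hEq
    rw [ef, ef] at hEq
    exact huniqf x hx (mul_left_cancel₀ (ne_of_gt hsinpos) hEq)
  · intro x hx
    rw [eg, eg]
    exact mul_le_mul_of_nonneg_left (hxgmax' x hx) hsinpos.le
  · intro x hx hEq
    rw [eg, eg] at hEq
    exact huniqg x hx (mul_left_cancel₀ (ne_of_gt hsinpos) hEq)
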